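/- Let ρ ≥ 1 be an integer and let k, k' be integers with 1 ≤ k ≤ k'. Suppose α ≥ ρ + 1 satisfies α = (1 + (α − ρ − 1)/(ρk + 1))^{ρk+1} and α' ≥ ρ + 1 satisfies α' = (1 + (α' − ρ − 1)/(ρk' + 1))^{ρk'+1}. Then α ≥ α'. -/

import Mathlib

open Real

/-- Monotonicity of `n ↦ (1 + t/n)^n` for `t ≥ 0`. -/
lemma one_add_div_pow_mono {t : ℝ} (ht : 0 ≤ t) {n m : ℕ} (hn : 1 ≤ n) (hnm : n ≤ m) :
    (1 + t / n) ^ n ≤ (1 + t / m) ^ m := by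
  have hn0 : (0:ℝ) < n := by exact_mod_cast hn
  have hm0 : (0:ℝ) < m := lt_of_lt_of_le hn0 (by exact_mod_cast hnm)
  set p : ℝ := (m : ℝ) / n with hp
  have hp1 : 1 ≤ p := (one_le_div hn0).2 (by exact_mod_cast hnm)
  have hs : (0:ℝ) ≤ t / m := div_nonneg ht hm0.le
  have h1 : 1 + t / n ≤ (1 + t / m) ^ p := by
    have := one_add_mul_self_le_rpow_one_add (s := t / m) (by linarith) hp1
    have hps : p * (t / m) = t / n := by
      field_simp [hp]
      rw [hp, div_mul_eq_mul_div, div_mul_cancel₀ _ hn0.ne']; ring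
    rwa [hps] at this
  have hbase : (0:ℝ) ≤ 1 + t / n := by positivity
  calc (1 + t / n) ^ n ≤ ((1 + t / m) ^ p) ^ n := pow_le_pow_left₀ hbase h1 n
    _ = (1 + t / m) ^ m := by
        rw [← Real.rpow_natCast ((1 + t / m) ^ p) n, ← Real.rpow_mul (by positivity)]
        rw [hp, div_mul_cancel₀ _ hn0.ne', Real.rpow_natCast]

/-- `α_k` is non-increasing in `k`: if `α` and `α'` are the roots at least `ρ+1`
of the defining equations for parameters `k ≤ k'`, then `α ≥ α'`. -/
theorem alpha_k_antitone
    (ρ : ℕ) (hρ : 1 ≤ ρ) (k k' : ℕ) (hk : 1 ≤ k) (hkk' : k ≤ k')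
    (α α' : ℝ)
    (hα : (ρ : ℝ) + 1 ≤ α)
    (hαeq : α = (1 + (α - (ρ : ℝ) - 1) / ((ρ : ℝ) * (k : ℝ) + 1)) ^ (ρ * k + 1))
    (hα' : (ρ : ℝ) + 1 ≤ α')
    (hα'eq : α' = (1 + (α' - (ρ : ℝ) - 1) / ((ρ : ℝ) * (k' : ℝ) + 1)) ^ (ρ * k' + 1)) :
    α' ≤ α := by
  by_contra hlt
  push_neg at hlt
  set c : ℝ := (ρ : ℝ) + 1 with hc
  have hρ1 : (1:ℝ) ≤ (ρ:ℝ) := by exact_mod_cast hρ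
  have hc2 : (2:ℝ) ≤ c := by linarith
  set n : ℕ := ρ * k + 1 with hnd
  set m : ℕ := ρ * k' + 1 with hmd
  have hn1 : 1 ≤ n := Nat.le_add_left 1 _
  have hnm : n ≤ m := by
    have : ρ * k ≤ ρ * k' := Nat.mul_le_mul_left ρ hkk'
    omega
  have hncast : ((n : ℝ)) = (ρ : ℝ) * (k : ℝ) + 1 := by push_cast [hnd]; ring
  have hmcast : ((m : ℝ)) = (ρ : ℝ) * (k' : ℝ) + 1 := by push_cast [hmd]; ring
  have hm0 : (0:ℝ) < m := by rw [hmcast]; positivity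
  have ht : (0:ℝ) ≤ α - c := by linarith
  -- step 1 : α ≤ (1 + (α - c)/m)^m
  have hbase : 1 + (α - c) / (n:ℝ) = 1 + (α - (ρ:ℝ) - 1) / ((ρ:ℝ) * (k:ℝ) + 1) := by
    rw [hncast, hc]; ring_nf
  have step1 : α ≤ (1 + (α - c) / m) ^ m := by
    calc α = (1 + (α - c) / n) ^ n := by rw [hbase]; exact hαeq
      _ ≤ (1 + (α - c) / m) ^ m := one_add_div_pow_mono ht hn1 hnm
  -- convexity step
  have hα'c : 0 ≤ α' - c := by linarith
  have hαα' : 0 < α' - α := by linarith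
  have hden : 0 < α' - c := by linarith
  set lam : ℝ := (α - c) / (α' - c) with hlam
  have hlam0 : 0 ≤ lam := div_nonneg ht hden.le
  have hlam1 : lam < 1 := (div_lt_one hden).2 (by linarith)
  have hconv := (convexOn_pow m).2 (Set.mem_Ici.2 (by norm_num : (0:ℝ) ≤ 1))
      (Set.mem_Ici.2 (by positivity : (0:ℝ) ≤ 1 + (α' - c) / m))
      (by linarith : (0:ℝ) ≤ 1 - lam) hlam0 (by ring)
  have hmix : (1 - lam) • (1:ℝ) + lam • (1 + (α' - c) / m) = 1 + (α - c) / m := by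
    simp only [smul_eq_mul, hlam]
    field_simp
    ring
  rw [hmix] at hconv
  simp only [smul_eq_mul, one_pow, mul_one] at hconv
  have hbase' : 1 + (α' - c) / (m:ℝ) = 1 + (α' - (ρ:ℝ) - 1) / ((ρ:ℝ) * (k':ℝ) + 1) := by
    rw [hmcast, hc]; ring_nf
  have hα'val : (1 + (α' - c) / m) ^ m = α' := by
    rw [hbase']; exact hα'eq.symm
  rw [hα'val] at hconv
  -- combine
  have hαval : α = c + lam * (α' - c) := by
    rw [hlam]; field_simp; ring
  nlinarith [step1, hconv, hc2, hlam1]
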